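/- Let r > 0 and let G be a digraph. Let (N₁,...,N_s) be the strongly connected components of G[≤r] and (U₁,...,U_k) those of G[<r]. Then for every arc e inside some component N_j of G[≤r] but not inside any strongly connected component of G[<r], the balance value satisfies β(e) = max{r, c(e)}. -/

import Mathlib

open scoped Classical

variable {V : Type*}

/-- `IsWalk A u v l`: `u :: l` is a directed walk from `u` to `v` in the digraph with
arc relation `A`. -/
def IsWalk (A : V → V → Prop) (u v : V) (l : List V) : Prop :=
  List.Chain A u l ∧ (u :: l).getLast (List.cons_ne_nil u l) = v

/-- The list of arcs of the walk `u :: l`. -/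
def walkArcs (u : V) (l : List V) : List (V × V) := (u :: l).zip l

/-- The cost of a walk: the sum of the costs of its arcs. -/
noncomputable def walkCost (c : V → V → ℝ) (u : V) (l : List V) : ℝ :=
  ((walkArcs u l).map fun e => c e.1 e.2).sum

/-- A (simple) directed cycle through the arc `(x, y)`: the arc `(x, y)` together with a
walk from `y` back to `x` visiting pairwise distinct nodes. -/
def IsCycleThrough (A : V → V → Prop) (x y : V) (l : List V) : Prop :=
  A x y ∧ IsWalk A y x l ∧ (y :: l).Nodup

/-- The arcs of the cycle through `(x, y)` given by the return walk `y :: l`. -/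
def cycleArcs (x y : V) (l : List V) : List (V × V) := (x, y) :: walkArcs y l

/-- `G = (V, A, c)` is `ξ`-min-balanced: every arc lies on a directed cycle all of whose
arcs have cost at most `ξ` times the cost of the given arc. -/
def MinBalanced (A : V → V → Prop) (c : V → V → ℝ) (ξ : ℝ) : Prop :=
  ∀ x y, A x y → ∃ l, IsCycleThrough A x y l ∧
    ∀ f ∈ cycleArcs x y l, c f.1 f.2 ≤ ξ * c x y

/-- A digraph is strongly connected if there is a directed walk between any two nodes. -/
def StronglyConnected (A : V → V → Prop) : Prop := ∀ u v : V, ∃ l, IsWalk A u v l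

/-- The bottleneck cost `b(i,j)`: the least `t` such that there is a directed `i`–`j`
walk all of whose arcs have cost at most `t`. -/
noncomputable def bottleneck (A : V → V → Prop) (c : V → V → ℝ) (i j : V) : ℝ :=
  sInf {t | ∃ l, IsWalk A i j l ∧ ∀ f ∈ walkArcs i l, c f.1 f.2 ≤ t}

/-- The balance value `β(e)` of the arc `e = (x, y)`: the smallest `r` such that there is
a directed cycle through `e` all of whose arcs have cost at most `r`. -/
noncomputable def balanceValue (A : V → V → Prop) (c : V → V → ℝ) (x y : V) : ℝ :=
  sInf {r | ∃ l, IsCycleThrough A x y l ∧ ∀ f ∈ cycleArcs x y l, c f.1 f.2 ≤ r}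

lemma chain_walkArcs {B : V → V → Prop} :
    ∀ {u : V} {l : List V}, List.Chain B u l → ∀ f ∈ walkArcs u l, B f.1 f.2 := by
  intro u l
  induction l generalizing u with
  | nil => intro _ f hf; simp [walkArcs] at hf
  | cons w t ih =>
    intro h f hf
    unfold List.Chain at h
    rw [List.chain_cons] at h
    simp only [walkArcs, List.zip_cons_cons, List.mem_cons] at hf
    rcases hf with rfl | hf
    · exact h.1
    · exact ih h.2 f hf

lemma chain_of_walkArcs {A P : V → V → Prop} :
    ∀ {u : V} {l : List V}, List.Chain A u l → (∀ f ∈ walkArcs u l, P f.1 f.2) →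
      List.Chain (fun a b => A a b ∧ P a b) u l := by
  intro u l
  induction l generalizing u with
  | nil => intro _ _; exact List.Chain.nil
  | cons w t ih =>
    intro h hP
    unfold List.Chain at h ⊢
    rw [List.chain_cons] at h ⊢
    simp only [walkArcs, List.zip_cons_cons, List.mem_cons] at hP
    exact ⟨⟨h.1, hP (u, w) (Or.inl rfl)⟩, ih h.2 fun f hf => hP f (Or.inr hf)⟩

lemma walk_dedup {B : V → V → Prop} :
    ∀ (n : ℕ) (l : List V) (u v : V), l.length ≤ n → IsWalk B u v l →
      ∃ l', IsWalk B u v l' ∧ (u :: l').Nodup ∧ l' ⊆ l := by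
  intro n
  induction n with
  | zero =>
    intro l u v hl hw
    have : l = [] := List.length_eq_zero_iff.1 (Nat.le_zero.1 hl)
    subst this
    exact ⟨[], hw, by simp, by simp⟩
  | succ n ih =>
    intro l u v hl hw
    match l with
    | [] => exact ⟨[], hw, by simp, by simp⟩
    | w :: t =>
      by_cases hu : u ∈ w :: t
      · obtain ⟨l₁, l₂, hdec⟩ := List.append_of_mem hu
        have hchain : List.Chain B u l₂ := by
          have h1 : List.Chain' B (u :: (w :: t)) := hw.1
          rw [hdec] at h1
          have hsuf : (u :: l₂) <:+ (u :: (l₁ ++ u :: l₂)) := ⟨u :: l₁, by simp⟩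
          exact h1.suffix hsuf
        have hlast : (u :: l₂).getLast (List.cons_ne_nil u l₂) = v := by
          have h2 := hw.2
          rw [hdec] at h2
          rw [← List.getLast_append_of_ne_nil (l := u :: l₁) (by simp) (List.cons_ne_nil u l₂)]
          rw [← h2]
          congr 1
        have hlen : l₂.length ≤ n := by
          have := hl
          rw [hdec] at this
          simp at this
          omega
        obtain ⟨l', h1, h2, h3⟩ := ih l₂ u v hlen ⟨hchain, hlast⟩
        refine ⟨l', h1, h2, fun a ha => ?_⟩
        rw [hdec]
        exact List.mem_append.2 (Or.inr (List.mem_cons_of_mem _ (h3 ha)))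
      · have hch := List.chain_cons.1 hw.1
        have hlast : (w :: t).getLast (List.cons_ne_nil w t) = v := by
          have := hw.2
          rwa [List.getLast_cons (List.cons_ne_nil w t)] at this
        obtain ⟨t', h1, h2, h3⟩ := ih t w v (by simpa using hl) ⟨hch.2, hlast⟩
        refine ⟨w :: t', ⟨List.chain_cons.2 ⟨hch.1, h1.1⟩, ?_⟩, ?_, ?_⟩
        · rw [List.getLast_cons (List.cons_ne_nil w t')]; exact h1.2
        · refine List.nodup_cons.2 ⟨?_, h2⟩
          intro hmem
          rcases List.mem_cons.1 hmem with rfl | hmem'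
          · exact hu (List.mem_cons_self)
          · exact hu (List.mem_cons_of_mem _ (h3 hmem'))
        · intro a ha
          rcases List.mem_cons.1 ha with rfl | ha'
          · exact List.mem_cons_self
          · exact List.mem_cons_of_mem _ (h3 ha')

/-- Let `r > 0`. For an arc `e = (x,y)` whose endpoints lie in the same
strongly connected component of `G[≤r]`, but which does not lie inside a strongly
connected component of `G[<r]` (i.e. it is not an arc of cost `< r` with mutually
`<r`-reachable endpoints), the balance value is `β(e) = max{r, c(e)}`. -/
theorem balanceValue_at_threshold [Fintype V] (A : V → V → Prop) (c : V → V → ℝ)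
    (hc : ∀ x y, A x y → 0 < c x y) (hsc : StronglyConnected A)
    (r : ℝ) (hr : 0 < r) (x y : V) (hxy : A x y)
    (hle : (∃ l, IsWalk (fun u v => A u v ∧ c u v ≤ r) x y l) ∧
           (∃ l, IsWalk (fun u v => A u v ∧ c u v ≤ r) y x l))
    (hlt : ¬ (c x y < r ∧ (∃ l, IsWalk (fun u v => A u v ∧ c u v < r) x y l) ∧
           (∃ l, IsWalk (fun u v => A u v ∧ c u v < r) y x l))) :
    balanceValue A c x y = max r (c x y) := by
  set M := max r (c x y) with hM
  set S : Set ℝ :=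
    {t | ∃ l, IsCycleThrough A x y l ∧ ∀ f ∈ cycleArcs x y l, c f.1 f.2 ≤ t} with hS
  obtain ⟨l, hw⟩ := hle.2
  obtain ⟨l', hw', hnd, -⟩ := walk_dedup l.length l y x le_rfl hw
  have hmem : M ∈ S := by
    refine ⟨l', ⟨hxy, ⟨List.IsChain.imp (fun a b h => h.1) hw'.1, hw'.2⟩, hnd⟩, ?_⟩
    intro f hf
    rcases List.mem_cons.1 hf with rfl | hf'
    · exact le_max_right _ _
    · exact le_trans (chain_walkArcs hw'.1 f hf').2 (le_max_left _ _)
  have hlb : ∀ t ∈ S, M ≤ t := by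
    rintro t ⟨l₀, hcyc, hb⟩
    have hcx : c x y ≤ t := hb (x, y) (List.mem_cons_self)
    have hrt : r ≤ t := by
      by_contra h
      push_neg at h
      refine hlt ⟨lt_of_le_of_lt hcx h, ⟨[y], ?_, by simp⟩, ⟨l₀, ?_, hcyc.2.1.2⟩⟩
      · exact List.chain_cons.2 ⟨⟨hxy, lt_of_le_of_lt hcx h⟩, List.Chain.nil⟩
      · exact chain_of_walkArcs hcyc.2.1.1 fun f hf =>
          lt_of_le_of_lt (hb f (List.mem_cons_of_mem _ hf)) h
    exact max_le hrt hcx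
  exact le_antisymm (csInf_le ⟨M, fun t ht => hlb t ht⟩ hmem) (le_csInf ⟨M, hmem⟩ hlb)
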